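/- Let h : {1, 2, 3, …} → ℚ be a sequence satisfying the recursion h_{n+1} = Σ_{l=1}^{n} ((2n−1)! · l² · (n+1−l)²) / ((2l−2)! · (2(n−l))! · (n+1)) · h_l · h_{n+1−l} for all n ≥ 1. Define the formal power series H̃ ∈ ℚ[[x, q, s]] by H̃(x, q, s) = Σ_{n≥1} h_n · qⁿ · exp(n·s·x) · s^{2n−2}/(2n−2)! (where exp(n·s·x) is expanded as a formal power series in s·x), and let D = q·∂/∂q. Then H̃ satisfies ∂/∂s (D²H̃) = 2s·(D²H̃)·(D³H̃) + x·(D³H̃) in ℚ[[x, q, s]]. -/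

import Mathlib

/-- The Euler-type derivation `D = q·∂/∂q` on `ℚ[[x,q,s]]`, where the variable `x`
corresponds to the index `0`, `q` to the index `1`, and `s` to the index `2`. -/
noncomputable def Dq (F : MvPowerSeries (Fin 3) ℚ) : MvPowerSeries (Fin 3) ℚ :=
  fun m => (m 1 : ℚ) * MvPowerSeries.coeff m F

/-- The formal partial derivative `∂/∂s` on `ℚ[[x,q,s]]`. -/
noncomputable def Ds (F : MvPowerSeries (Fin 3) ℚ) : MvPowerSeries (Fin 3) ℚ :=
  fun m => ((m 2 : ℚ) + 1) * MvPowerSeries.coeff (m + Finsupp.single 2 1) F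

/-- The series `H̃(x,q,s) = Σ_{n≥1} h_n·qⁿ·exp(n·s·x)·s^{2n−2}/(2n−2)!` in `ℚ[[x,q,s]]`,
where `exp(n·s·x)` is expanded as a formal power series in `s·x`:  the coefficient of
`x^a q^n s^c` vanishes unless `n ≥ 1` and `c = 2n − 2 + a`, in which case it equals
`h_n·nᵃ/(a!·(2n−2)!)`. -/
noncomputable def Htilde (h : ℕ → ℚ) : MvPowerSeries (Fin 3) ℚ :=
  fun m => if 1 ≤ m 1 ∧ m 2 = 2 * m 1 - 2 + m 0
    then h (m 1) * (m 1 : ℚ) ^ (m 0) / (((m 0).factorial : ℚ) * ((2 * m 1 - 2).factorial : ℚ))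
    else 0




open Finset MvPowerSeries Finsupp

noncomputable def E3 (i l k : ℕ) : Fin 3 →₀ ℕ := single 0 i + single 1 l + single 2 k

@[simp] lemma E3_apply0 (i l k : ℕ) : E3 i l k 0 = i := by simp [E3, Finsupp.single_apply]
@[simp] lemma E3_apply1 (i l k : ℕ) : E3 i l k 1 = l := by simp [E3, Finsupp.single_apply]
@[simp] lemma E3_apply2 (i l k : ℕ) : E3 i l k 2 = k := by simp [E3, Finsupp.single_apply]

lemma fin3_ext {p q : Fin 3 →₀ ℕ} (h0 : p 0 = q 0) (h1 : p 1 = q 1) (h2 : p 2 = q 2) :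
    p = q := by
  ext x; fin_cases x
  · exact h0
  · exact h1
  · exact h2

@[simp] lemma coeff_Dq (F : MvPowerSeries (Fin 3) ℚ) (p : Fin 3 →₀ ℕ) :
    MvPowerSeries.coeff p (Dq F) = (p 1 : ℚ) * MvPowerSeries.coeff p F := rfl

lemma coeff_Htilde (h : ℕ → ℚ) (p : Fin 3 →₀ ℕ) :
    MvPowerSeries.coeff p (Htilde h) = if 1 ≤ p 1 ∧ p 2 = 2 * p 1 - 2 + p 0
    then h (p 1) * (p 1 : ℚ) ^ (p 0) / (((p 0).factorial : ℚ) * ((2 * p 1 - 2).factorial : ℚ))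
    else 0 := rfl

lemma nonzero_cond (h : ℕ → ℚ) (p r : Fin 3 →₀ ℕ)
    (hne : MvPowerSeries.coeff p (Dq (Dq (Htilde h)))
      * MvPowerSeries.coeff r (Dq (Dq (Dq (Htilde h)))) ≠ 0) :
    (1 ≤ p 1 ∧ p 2 = 2 * p 1 - 2 + p 0) ∧ (1 ≤ r 1 ∧ r 2 = 2 * r 1 - 2 + r 0) := by
  constructor
  · by_contra hc
    apply hne
    simp only [coeff_Dq, coeff_Htilde, if_neg hc]
    ring
  · by_contra hc
    apply hne
    simp only [coeff_Dq, coeff_Htilde, if_neg hc]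
    ring

lemma prod_coeff (h : ℕ → ℚ) (m : Fin 3 →₀ ℕ) :
    MvPowerSeries.coeff m (Dq (Dq (Htilde h)) * Dq (Dq (Dq (Htilde h))))
      = ∑ x ∈ (Icc 1 (m 1)) ×ˢ (range (m 0 + 1)),
          (if E3 x.2 x.1 (2 * x.1 - 2 + x.2) ≤ m then
            MvPowerSeries.coeff (E3 x.2 x.1 (2 * x.1 - 2 + x.2)) (Dq (Dq (Htilde h)))
              * MvPowerSeries.coeff (m - E3 x.2 x.1 (2 * x.1 - 2 + x.2))
                  (Dq (Dq (Dq (Htilde h))))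
          else 0) := by
  rw [MvPowerSeries.coeff_mul]
  apply Finset.sum_bij_ne_zero (fun p _ _ => (p.1 1, p.1 0))
  · -- maps into target set
    rintro ⟨p, r⟩ hmem hne
    rw [Finset.HasAntidiagonal.mem_antidiagonal] at hmem
    obtain ⟨⟨hp1, _⟩, _⟩ := nonzero_cond h p r hne
    have h1 : p 1 ≤ m 1 := by
      have := DFunLike.congr_fun hmem 1
      simp only [Finsupp.add_apply] at this
      omega
    have h0 : p 0 ≤ m 0 := by
      have := DFunLike.congr_fun hmem 0
      simp only [Finsupp.add_apply] at this
      omega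
    simp only [Finset.mem_product, Finset.mem_Icc, Finset.mem_range]
    exact ⟨⟨hp1, h1⟩, by omega⟩
  · -- injective
    rintro ⟨p₁, r₁⟩ hm₁ hne₁ ⟨p₂, r₂⟩ hm₂ hne₂ heq
    rw [Finset.HasAntidiagonal.mem_antidiagonal] at hm₁ hm₂
    obtain ⟨⟨_, hp₁⟩, _⟩ := nonzero_cond h p₁ r₁ hne₁
    obtain ⟨⟨_, hp₂⟩, _⟩ := nonzero_cond h p₂ r₂ hne₂
    simp only [Prod.mk.injEq] at heq
    obtain ⟨e1, e0⟩ := heq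
    have hpp : p₁ = p₂ := fin3_ext e0 e1 (by rw [hp₁, hp₂, e0, e1])
    have hrr : r₁ = r₂ := by
      subst hpp
      exact add_left_cancel (hm₁.trans hm₂.symm)
    simp [hpp, hrr]
  · -- surjective
    rintro ⟨l, i⟩ hmem hgne
    have hle : E3 i l (2 * l - 2 + i) ≤ m := by
      by_contra hc
      exact hgne (if_neg hc)
    refine ⟨(E3 i l (2 * l - 2 + i), m - E3 i l (2 * l - 2 + i)), ?_, ?_, ?_⟩
    · rw [Finset.HasAntidiagonal.mem_antidiagonal]
      exact add_tsub_cancel_of_le hle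
    · rw [if_pos hle] at hgne
      exact hgne
    · simp
  · -- values agree
    rintro ⟨p, r⟩ hmem hne
    rw [Finset.HasAntidiagonal.mem_antidiagonal] at hmem
    obtain ⟨⟨hp1, hp2⟩, _⟩ := nonzero_cond h p r hne
    have hpE : p = E3 (p 0) (p 1) (2 * p 1 - 2 + p 0) :=
      fin3_ext (by simp) (by simp) (by simp [hp2])
    have hpm : p ≤ m := by
      rw [← hmem]
      exact le_add_right le_rfl
    have hrm : m - p = r := by
      rw [← hmem]
      exact add_tsub_cancel_left p r
    simp only []
    rw [if_pos (hpE ▸ hpm), ← hpE, hrm]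


@[simp] lemma coeff_Ds (F : MvPowerSeries (Fin 3) ℚ) (p : Fin 3 →₀ ℕ) :
    MvPowerSeries.coeff p (Ds F)
      = ((p 2 : ℚ) + 1) * MvPowerSeries.coeff (p + Finsupp.single 2 1) F := rfl

lemma coeff_X_mul' (s : Fin 3) (G : MvPowerSeries (Fin 3) ℚ) (m : Fin 3 →₀ ℕ) :
    MvPowerSeries.coeff m (X s * G)
      = if 1 ≤ m s then MvPowerSeries.coeff (m - single s 1) G else 0 := by
  rw [X_def, coeff_monomial_mul]
  simp [Finsupp.single_le_iff]

lemma binom_sum (a n l : ℕ) (hl : l ≤ n) :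
    ∑ i ∈ range (a + 1), ((l : ℚ) ^ i / i.factorial) * (((n - l : ℕ) : ℚ) ^ (a - i) / (a - i).factorial)
      = (n : ℚ) ^ a / a.factorial := by
  have hfa : (a.factorial : ℚ) ≠ 0 := Nat.cast_ne_zero.mpr a.factorial_ne_zero
  have key : ((l : ℚ) + ((n - l : ℕ) : ℚ)) ^ a
      = ∑ i ∈ range (a + 1), (l : ℚ) ^ i * ((n - l : ℕ) : ℚ) ^ (a - i) * (a.choose i : ℚ) :=
    add_pow _ _ a
  have hcast : ((l : ℚ) + ((n - l : ℕ) : ℚ)) = (n : ℚ) := by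
    push_cast [Nat.cast_sub hl]; ring
  rw [hcast] at key
  rw [eq_div_iff hfa, Finset.sum_mul, key]
  apply Finset.sum_congr rfl
  intro i hi
  have hia : i ≤ a := Nat.lt_succ_iff.mp (Finset.mem_range.mp hi)
  have hfact : ((a.choose i : ℚ)) * (i.factorial : ℚ) * ((a - i).factorial : ℚ) = (a.factorial : ℚ) := by
    exact_mod_cast congrArg (Nat.cast : ℕ → ℚ) (Nat.choose_mul_factorial_mul_factorial hia)
  have h1 : (i.factorial : ℚ) ≠ 0 := Nat.cast_ne_zero.mpr i.factorial_ne_zero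
  have h2 : ((a - i).factorial : ℚ) ≠ 0 := Nat.cast_ne_zero.mpr (a - i).factorial_ne_zero
  generalize ((n - l : ℕ) : ℚ) = y at *
  rw [← hfact]
  field_simp

noncomputable def Phi (h : ℕ → ℚ) (m : Fin 3 →₀ ℕ) (l i : ℕ) : ℚ :=
  if E3 i l (2 * l - 2 + i) ≤ m then
    MvPowerSeries.coeff (E3 i l (2 * l - 2 + i)) (Dq (Dq (Htilde h)))
      * MvPowerSeries.coeff (m - E3 i l (2 * l - 2 + i)) (Dq (Dq (Dq (Htilde h))))
  else 0

lemma prod_coeff' (h : ℕ → ℚ) (m : Fin 3 →₀ ℕ) :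
    MvPowerSeries.coeff m (Dq (Dq (Htilde h)) * Dq (Dq (Dq (Htilde h))))
      = ∑ x ∈ (Icc 1 (m 1)) ×ˢ (range (m 0 + 1)), Phi h m x.1 x.2 :=
  prod_coeff h m

lemma E3_le_iff (i l k : ℕ) (m : Fin 3 →₀ ℕ) :
    E3 i l k ≤ m ↔ i ≤ m 0 ∧ l ≤ m 1 ∧ k ≤ m 2 := by
  constructor
  · intro H
    refine ⟨?_, ?_, ?_⟩
    · simpa using Finsupp.le_def.mp H 0
    · simpa using Finsupp.le_def.mp H 1
    · simpa using Finsupp.le_def.mp H 2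
  · rintro ⟨h1, h2, h3⟩
    rw [Finsupp.le_def]
    intro x
    fin_cases x
    · simpa using h1
    · simpa using h2
    · simpa using h3

lemma Phi_zero (h : ℕ → ℚ) (m : Fin 3 →₀ ℕ) (l i : ℕ)
    (hbad : ¬(2 ≤ m 1 ∧ m 2 = 2 * m 1 - 4 + m 0 ∧ l + 1 ≤ m 1 ∧ i ≤ m 0)) :
    Phi h m l i = 0 := by
  unfold Phi
  split_ifs with hle
  · by_contra hne
    obtain ⟨⟨hp1, hp2⟩, ⟨hr1, hr2⟩⟩ := nonzero_cond h _ _ hne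
    rw [E3_le_iff] at hle
    simp only [E3_apply0, E3_apply1, E3_apply2, Finsupp.tsub_apply] at hp1 hp2 hr1 hr2
    omega
  · rfl

lemma Phi_eval (h : ℕ → ℚ) (m : Fin 3 →₀ ℕ) (l i : ℕ) (hl : 1 ≤ l) (hln : l + 1 ≤ m 1)
    (hi : i ≤ m 0) (hcm : m 2 = 2 * m 1 - 4 + m 0) :
    Phi h m l i
      = ((l : ℚ) ^ 2 * ((m 1 - l : ℕ) : ℚ) ^ 3 * h l * h (m 1 - l) /
          (((2 * l - 2).factorial : ℚ) * ((2 * (m 1 - l) - 2).factorial : ℚ)))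
        * (((l : ℚ) ^ i / (i.factorial : ℚ))
            * (((m 1 - l : ℕ) : ℚ) ^ (m 0 - i) / (((m 0 - i).factorial : ℚ)))) := by
  unfold Phi
  have hle : E3 i l (2 * l - 2 + i) ≤ m := (E3_le_iff _ _ _ m).mpr ⟨hi, by omega, by omega⟩
  rw [if_pos hle]
  have hcondp : 1 ≤ (E3 i l (2 * l - 2 + i)) 1 ∧
      (E3 i l (2 * l - 2 + i)) 2
        = 2 * (E3 i l (2 * l - 2 + i)) 1 - 2 + (E3 i l (2 * l - 2 + i)) 0 := by
    simp only [E3_apply0, E3_apply1, E3_apply2]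
    exact ⟨hl, trivial⟩
  have hcondr : 1 ≤ (m - E3 i l (2 * l - 2 + i)) 1 ∧
      (m - E3 i l (2 * l - 2 + i)) 2
        = 2 * (m - E3 i l (2 * l - 2 + i)) 1 - 2 + (m - E3 i l (2 * l - 2 + i)) 0 := by
    simp only [Finsupp.tsub_apply, E3_apply0, E3_apply1, E3_apply2]
    omega
  simp only [coeff_Dq, coeff_Htilde]
  rw [if_pos hcondp, if_pos hcondr]
  simp only [Finsupp.tsub_apply, E3_apply0, E3_apply1, E3_apply2]
  push_cast
  ring

lemma prod_coeff_closed (h : ℕ → ℚ) (m : Fin 3 →₀ ℕ) :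
    MvPowerSeries.coeff m (Dq (Dq (Htilde h)) * Dq (Dq (Dq (Htilde h))))
      = if 2 ≤ m 1 ∧ m 2 = 2 * m 1 - 4 + m 0 then
          (∑ l ∈ Icc 1 (m 1 - 1),
            (l : ℚ) ^ 2 * ((m 1 - l : ℕ) : ℚ) ^ 3 * h l * h (m 1 - l) /
              (((2 * l - 2).factorial : ℚ) * ((2 * (m 1 - l) - 2).factorial : ℚ))
            * ((m 1 : ℚ) ^ (m 0) / ((m 0).factorial : ℚ)))
        else 0 := by
  rw [prod_coeff' h m]
  by_cases H : 2 ≤ m 1 ∧ m 2 = 2 * m 1 - 4 + m 0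
  · obtain ⟨hn2, hcm⟩ := H
    rw [if_pos ⟨hn2, hcm⟩, Finset.sum_product]
    have hsub : Icc 1 (m 1 - 1) ⊆ Icc 1 (m 1) := Finset.Icc_subset_Icc_right (by omega)
    refine ((Finset.sum_subset hsub ?_).symm).trans (Finset.sum_congr rfl ?_)
    · intro l hlt hlns
      apply Finset.sum_eq_zero
      intro i hi
      apply Phi_zero
      simp only [Finset.mem_Icc] at hlt hlns
      omega
    · intro l hls
      simp only [Finset.mem_Icc] at hls
      calc ∑ i ∈ range (m 0 + 1), Phi h m l i
          = ∑ i ∈ range (m 0 + 1),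
              ((l : ℚ) ^ 2 * ((m 1 - l : ℕ) : ℚ) ^ 3 * h l * h (m 1 - l) /
                (((2 * l - 2).factorial : ℚ) * ((2 * (m 1 - l) - 2).factorial : ℚ)))
              * (((l : ℚ) ^ i / (i.factorial : ℚ))
                  * (((m 1 - l : ℕ) : ℚ) ^ (m 0 - i) / (((m 0 - i).factorial : ℚ)))) := by
            apply Finset.sum_congr rfl
            intro i hi
            exact Phi_eval h m l i (by omega) (by omega)
              (by simpa using Nat.lt_succ_iff.mp (Finset.mem_range.mp hi)) hcm
        _ = ((l : ℚ) ^ 2 * ((m 1 - l : ℕ) : ℚ) ^ 3 * h l * h (m 1 - l) /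
              (((2 * l - 2).factorial : ℚ) * ((2 * (m 1 - l) - 2).factorial : ℚ)))
            * ∑ i ∈ range (m 0 + 1),
                ((l : ℚ) ^ i / (i.factorial : ℚ))
                  * (((m 1 - l : ℕ) : ℚ) ^ (m 0 - i) / (((m 0 - i).factorial : ℚ))) :=
            (Finset.mul_sum _ _ _).symm
        _ = _ := by rw [binom_sum (m 0) (m 1) l (by omega)]
  · rw [if_neg H]
    apply Finset.sum_eq_zero
    rintro ⟨l, i⟩ hmem
    apply Phi_zero
    omega

lemma sum_reflect (N : ℕ) (f : ℕ → ℕ → ℚ) :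
    ∑ l ∈ Icc 1 N, f l (N + 1 - l) = ∑ l ∈ Icc 1 N, f (N + 1 - l) l := by
  refine Finset.sum_nbij' (fun l => N + 1 - l) (fun l => N + 1 - l) ?_ ?_ ?_ ?_ ?_ <;>
    intro l hl <;> simp only [Finset.mem_Icc] at * <;> try omega
  have : N + 1 - (N + 1 - l) = l := by omega
  rw [this]

lemma term_identity (h : ℕ → ℚ) (a N l : ℕ) (hN : 1 ≤ N) (hl1 : 1 ≤ l) (hlN : l ≤ N) :
    (l : ℚ) ^ 2 * ((N + 1 - l : ℕ) : ℚ) ^ 3 * h l * h (N + 1 - l) /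
        (((2 * l - 2).factorial : ℚ) * ((2 * (N + 1 - l) - 2).factorial : ℚ))
        * (((N + 1 : ℕ) : ℚ) ^ a / (a.factorial : ℚ))
      + ((N + 1 - l : ℕ) : ℚ) ^ 2 * (l : ℚ) ^ 3 * h (N + 1 - l) * h l /
          (((2 * (N + 1 - l) - 2).factorial : ℚ) * ((2 * l - 2).factorial : ℚ))
          * (((N + 1 : ℕ) : ℚ) ^ a / (a.factorial : ℚ))
      = (2 * (N : ℚ) * ((N + 1 : ℕ) : ℚ) ^ 2 * ((N + 1 : ℕ) : ℚ) ^ a /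
            ((a.factorial : ℚ) * (((2 * N).factorial) : ℚ)))
        * ((((2 * N - 1).factorial : ℚ) * (l : ℚ) ^ 2 * ((N + 1 - l : ℕ) : ℚ) ^ 2) /
              (((2 * l - 2).factorial : ℚ) * ((2 * (N - l)).factorial : ℚ) * ((N : ℚ) + 1)) *
            h l * h (N + 1 - l)) := by
  have hfac : ((2 * N).factorial : ℚ) = (2 * N : ℕ) * ((2 * N - 1).factorial : ℚ) := by
    exact_mod_cast (Nat.mul_factorial_pred (by omega : 2 * N ≠ 0)).symm
  have h2 : 2 * (N - l) = 2 * (N + 1 - l) - 2 := by omega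
  have hx : ((N + 1 - l : ℕ) : ℚ) = (N : ℚ) + 1 - l := by
    push_cast [Nat.cast_sub (by omega : l ≤ N + 1)]; ring
  rw [hfac, h2, hx]
  have e1 : ((2 * l - 2).factorial : ℚ) ≠ 0 := Nat.cast_ne_zero.mpr (Nat.factorial_ne_zero _)
  have e2 : ((2 * (N + 1 - l) - 2).factorial : ℚ) ≠ 0 := Nat.cast_ne_zero.mpr (Nat.factorial_ne_zero _)
  have e3 : ((2 * N - 1).factorial : ℚ) ≠ 0 := Nat.cast_ne_zero.mpr (Nat.factorial_ne_zero _)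
  have e4 : (a.factorial : ℚ) ≠ 0 := Nat.cast_ne_zero.mpr (Nat.factorial_ne_zero _)
  have e5 : ((2 * N : ℕ) : ℚ) ≠ 0 := by
    have : (0 : ℚ) < (2 * N : ℕ) := by exact_mod_cast (by omega : 0 < 2 * N)
    exact ne_of_gt this
  have e6 : (N : ℚ) + 1 ≠ 0 := by positivity
  field_simp
  push_cast
  ring

lemma final_arith (h : ℕ → ℚ)
    (hrec : ∀ n : ℕ, 1 ≤ n →
      h (n + 1) = ∑ l ∈ Finset.Icc 1 n,
        (((2 * n - 1).factorial : ℚ) * (l : ℚ) ^ 2 * ((n + 1 - l : ℕ) : ℚ) ^ 2) /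
            (((2 * l - 2).factorial : ℚ) * ((2 * (n - l)).factorial : ℚ) * ((n : ℚ) + 1)) *
          h l * h (n + 1 - l))
    (a n c : ℕ) (hn2 : 2 ≤ n) (hcc : c + 1 = 2 * n - 2 + a) :
    ((c : ℚ) + 1) *
        ((n : ℚ) * ((n : ℚ) * (h n * (n : ℚ) ^ a / ((a.factorial : ℚ) * ((2 * n - 2).factorial : ℚ)))))
      = ((∑ l ∈ Icc 1 (n - 1),
            (l : ℚ) ^ 2 * ((n - l : ℕ) : ℚ) ^ 3 * h l * h (n - l) /
              (((2 * l - 2).factorial : ℚ) * ((2 * (n - l) - 2).factorial : ℚ))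
            * ((n : ℚ) ^ a / (a.factorial : ℚ)))
          + (∑ l ∈ Icc 1 (n - 1),
            (l : ℚ) ^ 2 * ((n - l : ℕ) : ℚ) ^ 3 * h l * h (n - l) /
              (((2 * l - 2).factorial : ℚ) * ((2 * (n - l) - 2).factorial : ℚ))
            * ((n : ℚ) ^ a / (a.factorial : ℚ))))
        + (if 1 ≤ a then
            (n : ℚ) * ((n : ℚ) * ((n : ℚ) *
              (h n * (n : ℚ) ^ (a - 1) / (((a - 1).factorial : ℚ) * ((2 * n - 2).factorial : ℚ)))))
          else 0) := by
  obtain ⟨N, rfl⟩ : ∃ N, n = N + 1 := ⟨n - 1, by omega⟩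
  have hN : 1 ≤ N := by omega
  have hsimp1 : N + 1 - 1 = N := by omega
  have hsimp2 : 2 * (N + 1) - 2 = 2 * N := by omega
  rw [hsimp1, hsimp2]
  -- the key sum computation
  have key : (∑ l ∈ Icc 1 N,
        (l : ℚ) ^ 2 * ((N + 1 - l : ℕ) : ℚ) ^ 3 * h l * h (N + 1 - l) /
          (((2 * l - 2).factorial : ℚ) * ((2 * (N + 1 - l) - 2).factorial : ℚ))
          * (((N + 1 : ℕ) : ℚ) ^ a / (a.factorial : ℚ)))
      + (∑ l ∈ Icc 1 N,
        (l : ℚ) ^ 2 * ((N + 1 - l : ℕ) : ℚ) ^ 3 * h l * h (N + 1 - l) /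
          (((2 * l - 2).factorial : ℚ) * ((2 * (N + 1 - l) - 2).factorial : ℚ))
          * (((N + 1 : ℕ) : ℚ) ^ a / (a.factorial : ℚ)))
      = (2 * (N : ℚ) * ((N + 1 : ℕ) : ℚ) ^ 2 * ((N + 1 : ℕ) : ℚ) ^ a /
            ((a.factorial : ℚ) * (((2 * N).factorial) : ℚ))) * h (N + 1) := by
    nth_rewrite 2 [sum_reflect N (fun l l' =>
      (l : ℚ) ^ 2 * ((l' : ℕ) : ℚ) ^ 3 * h l * h l' /
        (((2 * l - 2).factorial : ℚ) * ((2 * l' - 2).factorial : ℚ))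
        * (((N + 1 : ℕ) : ℚ) ^ a / (a.factorial : ℚ)))]
    rw [← Finset.sum_add_distrib, hrec N hN, Finset.mul_sum]
    apply Finset.sum_congr rfl
    intro l hl
    simp only [Finset.mem_Icc] at hl
    exact term_identity h a N l hN hl.1 hl.2
  rw [key]
  -- now pure algebra
  have hc' : (c : ℚ) + 1 = 2 * (N : ℚ) + (a : ℚ) := by
    have : c + 1 = 2 * N + a := by omega
    exact_mod_cast congrArg (Nat.cast : ℕ → ℚ) this
  have e4 : (a.factorial : ℚ) ≠ 0 := Nat.cast_ne_zero.mpr (Nat.factorial_ne_zero _)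
  have e5 : (((2 * N).factorial : ℕ) : ℚ) ≠ 0 := Nat.cast_ne_zero.mpr (Nat.factorial_ne_zero _)
  by_cases hA : 1 ≤ a
  · rw [if_pos hA]
    obtain ⟨A, rfl⟩ : ∃ A, a = A + 1 := ⟨a - 1, by omega⟩
    have hsa : A + 1 - 1 = A := by omega
    rw [hsa]
    have hfa : ((A + 1).factorial : ℚ) = ((A : ℚ) + 1) * (A.factorial : ℚ) := by
      exact_mod_cast congrArg (Nat.cast : ℕ → ℚ) (Nat.factorial_succ A)
    have hpa : ((N + 1 : ℕ) : ℚ) ^ (A + 1) = ((N + 1 : ℕ) : ℚ) ^ A * ((N + 1 : ℕ) : ℚ) := pow_succ _ _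
    have eA : (A.factorial : ℚ) ≠ 0 := Nat.cast_ne_zero.mpr (Nat.factorial_ne_zero _)
    rw [hc', hfa, hpa]
    push_cast
    field_simp
  · rw [if_neg hA]
    have : a = 0 := by omega
    subst this
    rw [hc']
    push_cast
    field_simp
    ring

/-- **The reduced topological recursion relation for `ℂP¹` with `x = x⁰` kept.**
If the sequence `h` of rational numbers satisfies the recursion
`h_{n+1} = Σ_{l=1}^{n} ((2n−1)!·l²·(n+1−l)²)/((2l−2)!·(2(n−l))!·(n+1))·h_l·h_{n+1−l}`
for all `n ≥ 1`, then `H̃ = Σ_{n≥1} h_n qⁿ e^{nsx} s^{2n−2}/(2n−2)!` satisfies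
`∂/∂s(D²H̃) = 2s·(D²H̃)·(D³H̃) + x·(D³H̃)` in `ℚ[[x,q,s]]`, where `D = q·∂/∂q`. -/
theorem trr_CP1_with_x (h : ℕ → ℚ)
    (hrec : ∀ n : ℕ, 1 ≤ n →
      h (n + 1) = ∑ l ∈ Finset.Icc 1 n,
        (((2 * n - 1).factorial : ℚ) * (l : ℚ) ^ 2 * ((n + 1 - l : ℕ) : ℚ) ^ 2) /
            (((2 * l - 2).factorial : ℚ) * ((2 * (n - l)).factorial : ℚ) * ((n : ℚ) + 1)) *
          h l * h (n + 1 - l)) :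
    Ds (Dq (Dq (Htilde h))) =
      2 * MvPowerSeries.X 2 * Dq (Dq (Htilde h)) * Dq (Dq (Dq (Htilde h))) +
        MvPowerSeries.X 0 * Dq (Dq (Dq (Htilde h))) := by
  have hring : 2 * MvPowerSeries.X 2 * Dq (Dq (Htilde h)) * Dq (Dq (Dq (Htilde h))) +
        MvPowerSeries.X 0 * Dq (Dq (Dq (Htilde h)))
      = ((X 2 * (Dq (Dq (Htilde h)) * Dq (Dq (Dq (Htilde h))))
          + X 2 * (Dq (Dq (Htilde h)) * Dq (Dq (Dq (Htilde h)))))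
          + X 0 * Dq (Dq (Dq (Htilde h)))) := by ring
  rw [hring]
  ext m
  rw [map_add, map_add, coeff_X_mul', coeff_X_mul']
  have m'0 : ((m - single 2 1 : Fin 3 →₀ ℕ)) 0 = m 0 := by
    simp [Finsupp.tsub_apply, Finsupp.single_apply]
  have m'1 : ((m - single 2 1 : Fin 3 →₀ ℕ)) 1 = m 1 := by
    simp [Finsupp.tsub_apply, Finsupp.single_apply]
  have m'2 : ((m - single 2 1 : Fin 3 →₀ ℕ)) 2 = m 2 - 1 := by
    simp [Finsupp.tsub_apply, Finsupp.single_apply]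
  have p0 : ((m + single 2 1 : Fin 3 →₀ ℕ)) 0 = m 0 := by simp [Finsupp.single_apply]
  have p1 : ((m + single 2 1 : Fin 3 →₀ ℕ)) 1 = m 1 := by simp [Finsupp.single_apply]
  have p2 : ((m + single 2 1 : Fin 3 →₀ ℕ)) 2 = m 2 + 1 := by simp [Finsupp.single_apply]
  have q0 : ((m - single 0 1 : Fin 3 →₀ ℕ)) 0 = m 0 - 1 := by
    simp [Finsupp.tsub_apply, Finsupp.single_apply]
  have q1 : ((m - single 0 1 : Fin 3 →₀ ℕ)) 1 = m 1 := by
    simp [Finsupp.tsub_apply, Finsupp.single_apply]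
  have q2 : ((m - single 0 1 : Fin 3 →₀ ℕ)) 2 = m 2 := by
    simp [Finsupp.tsub_apply, Finsupp.single_apply]
  simp only [coeff_Ds, coeff_Dq, coeff_Htilde, prod_coeff_closed, m'0, m'1, m'2, p0, p1, p2,
    q0, q1, q2]
  set a := m 0 with ha
  set n := m 1 with hn
  set c := m 2 with hc
  have hcomb : ∀ S : ℚ,
      (if 1 ≤ c then (if 2 ≤ n ∧ c - 1 = 2 * n - 4 + a then S else 0) else 0)
        = (if 2 ≤ n ∧ c + 1 = 2 * n - 2 + a then S else 0) := by
    intro S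
    split_ifs <;> first | rfl | omega
  simp only [hcomb]
  by_cases HM : 1 ≤ n ∧ c + 1 = 2 * n - 2 + a
  · obtain ⟨hn1, hcc⟩ := HM
    by_cases hn2 : 2 ≤ n
    · rw [if_pos ⟨hn1, hcc⟩, if_pos ⟨hn2, hcc⟩]
      have haterm : (if 1 ≤ a then
            ((n : ℚ) * ((n : ℚ) * ((n : ℚ) *
              (if 1 ≤ n ∧ c = 2 * n - 2 + (a - 1) then
                h n * (n : ℚ) ^ (a - 1) / (((a - 1).factorial : ℚ) * ((2 * n - 2).factorial : ℚ))
              else 0))))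
          else 0)
          = (if 1 ≤ a then
            ((n : ℚ) * ((n : ℚ) * ((n : ℚ) *
              (h n * (n : ℚ) ^ (a - 1) / (((a - 1).factorial : ℚ) * ((2 * n - 2).factorial : ℚ))))))
          else 0) := by
        split_ifs <;> first | rfl | omega
      rw [haterm]
      exact final_arith h hrec a n c hn2 hcc
    · -- n = 1
      have hn1' : n = 1 := by omega
      have ha1 : a = c + 1 := by omega
      rw [if_pos ⟨hn1, hcc⟩, if_neg (by omega : ¬(2 ≤ n ∧ c + 1 = 2 * n - 2 + a)), hn1', ha1]
      rw [if_pos (by omega : 1 ≤ c + 1),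
        if_pos (by omega : 1 ≤ 1 ∧ c = 2 * 1 - 2 + (c + 1 - 1))]
      have hs : c + 1 - 1 = c := by omega
      rw [hs]
      have hfa : ((c + 1).factorial : ℚ) = ((c : ℚ) + 1) * (c.factorial : ℚ) := by
        exact_mod_cast congrArg (Nat.cast : ℕ → ℚ) (Nat.factorial_succ c)
      have ec : (c.factorial : ℚ) ≠ 0 := Nat.cast_ne_zero.mpr (Nat.factorial_ne_zero _)
      rw [hfa]
      push_cast
      field_simp
      ring
  · rw [if_neg (by omega : ¬(1 ≤ n ∧ c + 1 = 2 * n - 2 + a)),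
      if_neg (by omega : ¬(2 ≤ n ∧ c + 1 = 2 * n - 2 + a))]
    split_ifs with h1 h2
    · exfalso; omega
    · ring
    · ring
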